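/- Let n ≥ p ≥ 1 and k ≥ 2 be integers with n ≤ 2p, and let u be a length-p word over the alphabet Σ_k = {1,2,...,k}. Let a[1..p] be the unbordered prefix indicator of u and let b[1..p] be the border indicator of u. Then B_k(u,n) = (∑_{i=1}^{n-p} a[i]·k^{n-p-i}) + (∑_{i=n-p+1}^{⌊n/2⌋} a[i]·b[i-(n-p)]). -/

import Mathlib

/-- `u` is a border of `w`: `u` is both a non-empty proper prefix
and a non-empty proper suffix of `w`. -/
def IsBorder {α : Type*} (u w : List α) : Prop :=
  u ≠ [] ∧ u.length < w.length ∧ u <+: w ∧ u <:+ w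

/-- A word is bordered if it has a border. -/
def Bordered {α : Type*} (w : List α) : Prop := ∃ u, IsBorder u w

/-- A word is unbordered if it has no border. -/
def Unbordered {α : Type*} (w : List α) : Prop := ¬ Bordered w

/-- `u` is a shortest border of `w`: a border of `w` of minimum length. -/
def IsShortestBorder {α : Type*} (u w : List α) : Prop :=
  IsBorder u w ∧ ∀ v, IsBorder v w → u.length ≤ v.length

/-- `B k u n`: the number of length-`n` bordered words over the `k`-letter
alphabet `Fin k` that have `u` as a prefix. -/
noncomputable def B (k : ℕ) (u : List (Fin k)) (n : ℕ) : ℕ :=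
  Nat.card {w : List (Fin k) // w.length = n ∧ u <+: w ∧ Bordered w}

open scoped Classical in
/-- Unbordered prefix indicator: `upInd k u i = 1` iff the length-`i` prefix
of `u` is unbordered. -/
noncomputable def upInd (k : ℕ) (u : List (Fin k)) (i : ℕ) : ℕ :=
  if Unbordered (u.take i) then 1 else 0

open scoped Classical in
/-- Border indicator: `bInd k u i = 1` iff `u` has a border of length `i`. -/
noncomputable def bInd (k : ℕ) (u : List (Fin k)) (i : ℕ) : ℕ :=
  if ∃ v, IsBorder v u ∧ v.length = i then 1 else 0

section Aux

variable {α : Type*} {x y v v' w u : List α}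

lemma IsBorder.trans' (hx : IsBorder x v) (hv : IsBorder v w) : IsBorder x w :=
  ⟨hx.1, hx.2.1.trans hv.2.1, hx.2.2.1.trans hv.2.2.1, hx.2.2.2.trans hv.2.2.2⟩

lemma border_of_border_lt (hx : IsBorder x w) (hy : IsBorder y w)
    (h : x.length < y.length) : IsBorder x y :=
  ⟨hx.1, h, List.prefix_of_prefix_length_le hx.2.2.1 hy.2.2.1 h.le,
    List.suffix_of_suffix_length_le hx.2.2.2 hy.2.2.2 h.le⟩

lemma IsShortestBorder.unbordered (h : IsShortestBorder v w) : Unbordered v := by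
  rintro ⟨x, hx⟩
  have h1 := h.2 x (hx.trans' h.1)
  have h2 := hx.2.1
  omega

lemma IsShortestBorder.two_mul_le (h : IsShortestBorder v w) :
    2 * v.length ≤ w.length := by
  by_contra hlt
  push_neg at hlt
  obtain ⟨x, hx⟩ := h.1.2.2.1
  obtain ⟨y, hy⟩ := h.1.2.2.2
  have hvw : v.length < w.length := h.1.2.1
  have hxl : v.length + x.length = w.length := by
    have := congrArg List.length hx; simpa using this
  have hyl : y.length + v.length = w.length := by
    have := congrArg List.length hy; simpa using this
  have hyv : y <+: v :=
    List.prefix_of_prefix_length_le ⟨v, hy⟩ h.1.2.2.1 (by omega)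
  obtain ⟨s, hs⟩ := hyv
  have hsl : y.length + s.length = v.length := by
    have := congrArg List.length hs; simpa using this
  have hv2 : v = s ++ x := by
    apply List.append_cancel_left (as := y)
    rw [hy, ← hx, ← hs, List.append_assoc]
  have hsb : IsBorder s v := by
    refine ⟨?_, by omega, ⟨x, hv2.symm⟩, ⟨y, hs⟩⟩
    rw [← List.length_pos_iff]
    omega
  exact h.unbordered ⟨s, hsb⟩

lemma exists_isShortestBorder (hw : Bordered w) : ∃ v, IsShortestBorder v w := by
  have hS : {i | ∃ v, IsBorder v w ∧ v.length = i}.Nonempty := by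
    obtain ⟨v, hv⟩ := hw
    exact ⟨v.length, v, hv, rfl⟩
  obtain ⟨v, hv, hvl⟩ := Nat.sInf_mem hS
  exact ⟨v, hv, fun x hx => hvl ▸ Nat.sInf_le ⟨x, hx, rfl⟩⟩

/-- The length of the shortest border of `w` (junk value if unbordered). -/
noncomputable def sbl (w : List α) : ℕ := sInf {i | ∃ v, IsBorder v w ∧ v.length = i}

lemma IsShortestBorder.sbl_eq (h : IsShortestBorder v w) : sbl w = v.length := by
  refine le_antisymm (Nat.sInf_le ⟨v, h.1, rfl⟩) ?_
  have hS : {i | ∃ v, IsBorder v w ∧ v.length = i}.Nonempty := ⟨v.length, v, h.1, rfl⟩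
  obtain ⟨x, hx, hxl⟩ := Nat.sInf_mem hS
  have h2 := h.2 x hx
  rw [hxl] at h2
  exact h2

lemma IsShortestBorder.eq_take (h : IsShortestBorder v w) (hu : u <+: w)
    (hi : v.length ≤ u.length) : v = u.take v.length := by
  have hvu : v <+: u := List.prefix_of_prefix_length_le h.1.2.2.1 hu hi
  rw [← List.prefix_iff_eq_take]
  exact hvu

end Aux

/-- Recurrence for `B_k(u,n)` in the case `n ≤ 2p`. -/
theorem B_recurrence_le (k n p : ℕ) (hk : 2 ≤ k) (hp : 1 ≤ p) (hpn : p ≤ n)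
    (hn2p : n ≤ 2 * p) (u : List (Fin k)) (hu : u.length = p) :
    B k u n = (∑ i ∈ Finset.Icc 1 (n - p), upInd k u i * k ^ (n - p - i))
      + ∑ i ∈ Finset.Icc (n - p + 1) (n / 2), upInd k u i * bInd k u (i - (n - p)) := by
  classical
  have hq2 : 2 * (n / 2) ≤ n := Nat.mul_div_le n 2 |>.trans_eq (by ring_nf) |>.trans (le_refl n)
  -- the filtered finset of vectors
  set P : List.Vector (Fin k) n → Prop := fun w => u <+: w.1 ∧ Bordered w.1 with hPdef
  set S : Finset (List.Vector (Fin k) n) := Finset.univ.filter P with hSdef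
  have hB : B k u n = S.card := by
    have e : {w : List (Fin k) // w.length = n ∧ u <+: w ∧ Bordered w} ≃
        {w : List.Vector (Fin k) n // P w} :=
      { toFun := fun x => ⟨⟨x.1, x.2.1⟩, x.2.2.1, x.2.2.2⟩
        invFun := fun x => ⟨x.1.1, x.1.2, x.2.1, x.2.2⟩
        left_inv := fun x => rfl
        right_inv := fun x => rfl }
    rw [B, Nat.card_congr e, Nat.card_eq_fintype_card, Fintype.card_subtype]
  -- membership of the fiber statistic
  have hmem : ∀ w ∈ S, sbl w.1 ∈ Finset.Icc 1 (n / 2) := by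
    intro w hw
    rw [hSdef, Finset.mem_filter] at hw
    obtain ⟨v, hv⟩ := exists_isShortestBorder hw.2.2
    rw [hv.sbl_eq]
    have h1 : 0 < v.length := List.length_pos_iff.mpr hv.1.1
    have h2 := hv.two_mul_le
    rw [w.2] at h2
    rw [Finset.mem_Icc]
    omega
  -- key characterization of fibers
  have keyq : ∀ i, 1 ≤ i → i ≤ p → ∀ w : List.Vector (Fin k) n,
      (w ∈ S ∧ sbl w.1 = i) ↔ (u <+: w.1 ∧ IsShortestBorder (u.take i) w.1) := by
    intro i h1i hip w
    have htl : (u.take i).length = i := by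
      rw [List.length_take]; omega
    constructor
    · rintro ⟨hw, hsbl⟩
      rw [hSdef, Finset.mem_filter] at hw
      obtain ⟨v, hv⟩ := exists_isShortestBorder hw.2.2
      have hvl : v.length = i := by rw [← hv.sbl_eq, hsbl]
      have hvt : v = u.take i := by
        have := hv.eq_take hw.2.1 (by omega)
        rwa [hvl] at this
      exact ⟨hw.2.1, hvt ▸ hv⟩
    · rintro ⟨hpre, hsb⟩
      refine ⟨?_, by rw [hsb.sbl_eq, htl]⟩
      rw [hSdef, Finset.mem_filter]
      exact ⟨Finset.mem_univ _, hpre, ⟨u.take i, hsb.1⟩⟩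
  rw [hB, Finset.card_eq_sum_card_fiberwise hmem]
  -- split the sum
  have hsplit : ∑ i ∈ Finset.Icc 1 (n / 2), (S.filter fun w => sbl w.1 = i).card
      = (∑ i ∈ Finset.Icc 1 (n - p), (S.filter fun w => sbl w.1 = i).card)
        + ∑ i ∈ Finset.Icc (n - p + 1) (n / 2), (S.filter fun w => sbl w.1 = i).card := by
    have h0 : (0 : ℕ) ≤ n - p := Nat.zero_le _
    have h1 : n - p ≤ n / 2 := by omega
    rw [show Finset.Icc 1 (n / 2) = Finset.Ioc 0 (n / 2) from Finset.Icc_add_one_left_eq_Ioc 0 _,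
      show Finset.Icc 1 (n - p) = Finset.Ioc 0 (n - p) from Finset.Icc_add_one_left_eq_Ioc 0 _,
      show Finset.Icc (n - p + 1) (n / 2) = Finset.Ioc (n - p) (n / 2) from
        Finset.Icc_add_one_left_eq_Ioc _ _,
      Finset.sum_Ioc_consecutive _ h0 h1]
  rw [hsplit]
  congr 1
  · -- Case A : 1 ≤ i ≤ n - p
    refine Finset.sum_congr rfl ?_
    intro i hi
    rw [Finset.mem_Icc] at hi
    have hip : i ≤ p := by omega
    have htl : (u.take i).length = i := by rw [List.length_take]; omega
    by_cases hub : Unbordered (u.take i)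
    · -- fiber is in bijection with vectors of length n - p - i
      have hfun : ∀ m : List.Vector (Fin k) (n - p - i),
          (u ++ m.1 ++ u.take i).length = n := by
        intro m
        simp [hu, m.2, htl]
        omega
      have himg : S.filter (fun w => sbl w.1 = i)
          = Finset.image (fun m : List.Vector (Fin k) (n - p - i) =>
              (⟨u ++ m.1 ++ u.take i, hfun m⟩ : List.Vector (Fin k) n)) Finset.univ := by
        ext w
        rw [Finset.mem_filter]
        rw [show (w ∈ S ∧ sbl w.1 = i) ↔ _ from keyq i hi.1 hip w]
        erw [Finset.mem_image]
        simp only [Finset.mem_univ, true_and]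
        constructor
        · rintro ⟨hpre, hsb⟩
          obtain ⟨t, ht⟩ := hpre
          have htlen : t.length = n - p := by
            have := congrArg List.length ht
            simp [hu, w.2] at this
            omega
          have hts : t <:+ w.1 := ⟨u, ht⟩
          have hsuf : u.take i <:+ t :=
            List.suffix_of_suffix_length_le hsb.1.2.2.2 hts (by omega)
          obtain ⟨m', hm'⟩ := hsuf
          have hm'len : m'.length = n - p - i := by
            have := congrArg List.length hm'
            simp [htl, htlen] at this
            omega
          refine ⟨⟨m', hm'len⟩, ?_⟩
          apply Subtype.ext
          simp only
          rw [List.append_assoc, hm', ht]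
        · rintro ⟨m, rfl⟩
          simp only
          have htake_ne : u.take i ≠ [] := by
            rw [← List.length_pos_iff, htl]; omega
          have hpre : u <+: u ++ m.1 ++ u.take i := by
            rw [List.append_assoc]; exact List.prefix_append _ _
          refine ⟨hpre, ⟨htake_ne, ?_, ?_, List.suffix_append _ _⟩, ?_⟩
          · simp [hu, m.2, htl]; omega
          · exact (List.take_prefix i u).trans hpre
          · intro v hv
            by_contra hlt
            push_neg at hlt
            rw [htl] at hlt
            exact hub ⟨v, border_of_border_lt hv
              ⟨htake_ne, by rw [htl]; simp [hu, m.2, htl]; omega,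
                (List.take_prefix i u).trans hpre, List.suffix_append _ _⟩
              (by rw [htl]; omega)⟩
      rw [himg]
      erw [Finset.card_image_of_injective _ ?_]
      rw [Finset.card_univ, card_vector,
        Fintype.card_fin]
      · rw [upInd, if_pos hub, one_mul]
      · intro m m' hmm
        have := congrArg (fun x => x.1) hmm
        simp only at this
        apply Subtype.ext
        have h1 := List.append_cancel_left ((List.append_assoc u m.1 (u.take i)) ▸
          (List.append_assoc u m'.1 (u.take i)) ▸ this)
        exact List.append_cancel_right h1
    · -- fiber empty
      have : S.filter (fun w => sbl w.1 = i) = ∅ := by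
        rw [Finset.eq_empty_iff_forall_notMem]
        intro w hw
        rw [Finset.mem_filter,
          show (w ∈ S ∧ sbl w.1 = i) ↔ _ from keyq i hi.1 hip w] at hw
        exact hub hw.2.unbordered
      rw [this, upInd, if_neg hub]
      simp
  · -- Case B : n - p + 1 ≤ i ≤ n / 2
    refine Finset.sum_congr rfl ?_
    intro i hi
    rw [Finset.mem_Icc] at hi
    have hip : i ≤ p := by omega
    have h1i : 1 ≤ i := by omega
    have htl : (u.take i).length = i := by rw [List.length_take]; omega
    set j := i - (n - p) with hjdef
    by_cases hub : Unbordered (u.take i)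
    · by_cases hb : ∃ v, IsBorder v u ∧ v.length = j
      · -- fiber is a singleton
        obtain ⟨v, hv, hvl⟩ := hb
        have hvt : v = u.take j := by
          rw [← hvl, ← List.prefix_iff_eq_take]
          exact hv.2.2.1
        have hjp : j < p := by omega
        have hw0len : (u ++ (u.take i).drop j).length = n := by
          simp [hu, htl]; omega
        set w0 : List.Vector (Fin k) n := ⟨u ++ (u.take i).drop j, hw0len⟩ with hw0def
        have htake_ne : u.take i ≠ [] := by rw [← List.length_pos_iff, htl]; omega
        have hw0suf : u.take i <:+ w0.1 := by
          obtain ⟨y, hy⟩ := hv.2.2.2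
          have hthis : u.take j = (u.take i).take j := by
            rw [List.take_take]
            congr 1
            omega
          have key : y ++ u.take i = u ++ (u.take i).drop j :=
            calc y ++ u.take i
                = y ++ ((u.take i).take j ++ (u.take i).drop j) := by
                  rw [List.take_append_drop]
              _ = (y ++ (u.take i).take j) ++ (u.take i).drop j := by
                  rw [List.append_assoc]
              _ = (y ++ v) ++ (u.take i).drop j := by rw [hvt, hthis]
              _ = u ++ (u.take i).drop j := by rw [hy]
          exact ⟨y, key⟩
        have hw0pre : u <+: w0.1 := List.prefix_append _ _
        have hw0sb : IsShortestBorder (u.take i) w0.1 := by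
          refine ⟨⟨htake_ne, ?_, (List.take_prefix i u).trans hw0pre, hw0suf⟩, ?_⟩
          · rw [htl, w0.2]; omega
          · intro x hx
            by_contra hlt
            push_neg at hlt
            rw [htl] at hlt
            exact hub ⟨x, border_of_border_lt hx
              ⟨htake_ne, by rw [htl, w0.2]; omega,
                (List.take_prefix i u).trans hw0pre, hw0suf⟩ (by rw [htl]; omega)⟩
        have hw0mem : w0 ∈ S ∧ sbl w0.1 = i := (keyq i h1i hip w0).mpr ⟨hw0pre, hw0sb⟩
        -- every fiber element equals the canonical expression
        have hcanon : ∀ w : List.Vector (Fin k) n,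
            u <+: w.1 → u.take i <:+ w.1 → w.1 = u.take (n - i) ++ u.take i := by
          intro w hpre hsuf
          have hdrop : u.take i = w.1.drop (n - i) := by
            rw [List.suffix_iff_eq_drop] at hsuf
            rw [hsuf, htl, w.2]
          obtain ⟨m, hm⟩ := hpre
          have htk : w.1.take (n - i) = u.take (n - i) := by
            rw [← hm, List.take_append, hu,
              show n - i - p = 0 by omega, List.take_zero, List.append_nil]
          conv_lhs => rw [← List.take_append_drop (n - i) w.1]
          rw [htk, ← hdrop]
        have hsing : S.filter (fun w => sbl w.1 = i) = {w0} := by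
          ext w
          rw [Finset.mem_filter,
            show (w ∈ S ∧ sbl w.1 = i) ↔ _ from keyq i h1i hip w, Finset.mem_singleton]
          constructor
          · rintro ⟨hpre, hsb⟩
            apply Subtype.ext
            rw [hcanon w hpre hsb.1.2.2.2, ← hcanon w0 hw0pre hw0suf]
          · rintro rfl
            exact ⟨hw0pre, hw0sb⟩
        rw [hsing, Finset.card_singleton, upInd, if_pos hub, bInd,
          if_pos ⟨v, hv, hvl⟩]
      · -- no border of length j : fiber empty
        have : S.filter (fun w => sbl w.1 = i) = ∅ := by
          rw [Finset.eq_empty_iff_forall_notMem]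
          intro w hw
          rw [Finset.mem_filter,
            show (w ∈ S ∧ sbl w.1 = i) ↔ _ from keyq i h1i hip w] at hw
          obtain ⟨hpre, hsb⟩ := hw
          obtain ⟨m, hm⟩ := hpre
          have hmlen : m.length = n - p := by
            have := congrArg List.length hm
            simp [hu, w.2] at this
            omega
          have hms : m <:+ w.1 := ⟨u, hm⟩
          have hsuf : m <:+ u.take i :=
            List.suffix_of_suffix_length_le hms hsb.1.2.2.2 (by omega)
          obtain ⟨s, hs⟩ := hsuf
          have hslen : s.length = j := by
            have := congrArg List.length hs
            simp [htl, hmlen] at this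
            omega
          have hsu : s <:+ u := by
            obtain ⟨y, hy⟩ := hsb.1.2.2.2
            refine ⟨y, ?_⟩
            apply List.append_cancel_right (bs := m)
            rw [List.append_assoc, hs, hy, hm]
          have hspre : s <+: u := List.IsPrefix.trans ⟨m, hs⟩ (List.take_prefix i u)
          refine hb ⟨s, ⟨?_, ?_, hspre, hsu⟩, hslen⟩
          · rw [← List.length_pos_iff]; omega
          · rw [hslen, hu]; omega
        rw [this, bInd, if_neg hb]
        simp
    · -- take i bordered : fiber empty
      have : S.filter (fun w => sbl w.1 = i) = ∅ := by
        rw [Finset.eq_empty_iff_forall_notMem]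
        intro w hw
        rw [Finset.mem_filter,
          show (w ∈ S ∧ sbl w.1 = i) ↔ _ from keyq i h1i hip w] at hw
        exact hub hw.2.unbordered
      rw [this, upInd, if_neg hub]
      simp
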